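/- In the RURV setting (exact arithmetic), the leading r×r block of R satisfies σ_min(R(1:r,1:r))² ≤ σ_r² + σ_{r+1}²; in particular σ_min(R(1:r,1:r)) ≤ √2·σ_r. -/
import Mathlib


open Matrix

/-- The Euclidean norm of a real vector. -/
noncomputable def euclNorm {n : Type*} [Fintype n] (v : n → ℝ) : ℝ :=
  Real.sqrt (v ⬝ᵥ v)

/-- The smallest singular value of a real matrix: the infimum of `‖M·x‖₂` over
Euclidean-unit vectors `x`. -/
noncomputable def sigmaMin {m n : Type*} [Fintype m] [Fintype n]
    (M : Matrix m n ℝ) : ℝ :=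
  sInf {t | ∃ x : n → ℝ, euclNorm x = 1 ∧ t = euclNorm (M *ᵥ x)}

/- ## Auxiliary lemmas -/

/-- Zero-padding of a vector. -/
def padf {n r : ℕ} (h : r ≤ n) (x : Fin r → ℝ) : Fin n → ℝ :=
  fun j => if hj : j.val < r then x ⟨j.val, hj⟩ else 0

lemma padf_castLE {n r : ℕ} (h : r ≤ n) (x : Fin r → ℝ) (i : Fin r) :
    padf h x (Fin.castLE h i) = x i := by
  simp [padf, Fin.castLE]

lemma padf_zero {n r : ℕ} (h : r ≤ n) (x : Fin r → ℝ) (j : Fin n)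
    (hj : r ≤ j.val) : padf h x j = 0 := by
  simp [padf, Nat.not_lt.mpr hj]

lemma padf_add {n r : ℕ} (h : r ≤ n) (x y : Fin r → ℝ) :
    padf h (x + y) = padf h x + padf h y := by
  funext j; simp only [padf, Pi.add_apply]
  split <;> simp

lemma padf_smul {n r : ℕ} (h : r ≤ n) (c : ℝ) (x : Fin r → ℝ) :
    padf h (c • x) = c • padf h x := by
  funext j; simp only [padf, Pi.smul_apply]
  split <;> simp

lemma sum_pad_eq {n r : ℕ} (h : r ≤ n) (F : Fin n → ℝ)
    (hF : ∀ j : Fin n, r ≤ j.val → F j = 0) :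
    ∑ j, F j = ∑ i : Fin r, F (Fin.castLE h i) := by
  classical
  have key : ∑ j ∈ Finset.univ.map (Fin.castLEEmb h), F j = ∑ i : Fin r, F (Fin.castLE h i) := by
    rw [Finset.sum_map]; rfl
  rw [← key]
  refine (Finset.sum_subset (Finset.subset_univ _) ?_).symm
  intro j _ hj
  apply hF
  by_contra hc
  push_neg at hc
  exact hj (Finset.mem_map.mpr ⟨⟨j.1, hc⟩, Finset.mem_univ _, by ext; rfl⟩)

lemma dot_self_nonneg {m : Type*} [Fintype m] (v : m → ℝ) : 0 ≤ v ⬝ᵥ v :=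
  Finset.sum_nonneg fun i _ => mul_self_nonneg (v i)

lemma euclNorm_nonneg {m : Type*} [Fintype m] (v : m → ℝ) : 0 ≤ euclNorm v :=
  Real.sqrt_nonneg _

lemma euclNorm_sq {m : Type*} [Fintype m] (v : m → ℝ) :
    euclNorm v ^ 2 = v ⬝ᵥ v := Real.sq_sqrt (dot_self_nonneg v)

/-- Orthogonal matrices preserve the dot product of a vector with itself. -/
lemma orth_dot {n : Type*} [Fintype n] [DecidableEq n] {M : Matrix n n ℝ}
    (h : Mᵀ * M = 1) (v : n → ℝ) : (M *ᵥ v) ⬝ᵥ (M *ᵥ v) = v ⬝ᵥ v := by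
  rw [dotProduct_mulVec, ← Matrix.mulVec_transpose, mulVec_mulVec, h, one_mulVec]

lemma euclNorm_smul {m : Type*} [Fintype m] (c : ℝ) (v : m → ℝ) :
    euclNorm (c • v) = |c| * euclNorm v := by
  unfold euclNorm
  rw [smul_dotProduct, dotProduct_smul, smul_eq_mul, smul_eq_mul, ← mul_assoc,
    Real.sqrt_mul (mul_self_nonneg c), Real.sqrt_mul_self_eq_abs]

theorem rurv_leading_block_upper_bound {n : ℕ} (r : ℕ) (hr1 : 1 ≤ r) (hrn : r < n)
    (A P Q V U R : Matrix (Fin n) (Fin n) ℝ) (σ : Fin n → ℝ)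
    (hP : Pᵀ * P = 1) (hQ : Qᵀ * Q = 1) (hV : Vᵀ * V = 1) (hU : Uᵀ * U = 1)
    (hσdec : Antitone σ) (hσ0 : ∀ i, 0 ≤ σ i)
    (hA : A = P * diagonal σ * Qᵀ)
    (hRtri : R.BlockTriangular id)
    (hQR : A * Vᵀ = U * R) :
    sigmaMin (R.submatrix (Fin.castLE hrn.le) (Fin.castLE hrn.le)) ^ 2 ≤
        σ ⟨r - 1, by omega⟩ ^ 2 + σ ⟨r, hrn⟩ ^ 2 ∧
    sigmaMin (R.submatrix (Fin.castLE hrn.le) (Fin.castLE hrn.le)) ≤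
        Real.sqrt 2 * σ ⟨r - 1, by omega⟩ := by
  classical
  have hrn' : r ≤ n := hrn.le
  have hr1n : r - 1 ≤ n := by omega
  set B : Matrix (Fin n) (Fin n) ℝ := Qᵀ * Vᵀ with hB
  -- the constraint linear map
  let f : (Fin r → ℝ) →ₗ[ℝ] (Fin (r - 1) → ℝ) :=
    { toFun := fun x => fun i => (B *ᵥ padf hrn' x) (Fin.castLE hr1n i)
      map_add' := fun x y => by
        funext i; simp [padf_add, Matrix.mulVec_add]
      map_smul' := fun c x => by
        funext i; simp only [padf_smul, Matrix.mulVec_smul, Pi.smul_apply, RingHom.id_apply] }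
  -- f is not injective
  have hfni : ¬ Function.Injective f := by
    intro hi
    have := LinearMap.finrank_le_finrank_of_injective hi
    rw [Module.finrank_fin_fun, Module.finrank_fin_fun] at this
    omega
  rw [Function.not_injective_iff] at hfni
  obtain ⟨a, b, hab, hne⟩ := hfni
  set z : Fin r → ℝ := a - b with hz
  have hzne : z ≠ 0 := sub_ne_zero_of_ne hne
  have hfz : f z = 0 := by rw [hz, map_sub, hab, sub_self]
  -- normalize z
  have hzz : 0 < z ⬝ᵥ z := by
    rcases (dot_self_nonneg z).lt_or_eq with h | h
    · exact h
    · exfalso; apply hzne; funext i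
      have := Finset.sum_eq_zero_iff_of_nonneg
        (fun j (_ : j ∈ Finset.univ) => mul_self_nonneg (z j)) |>.mp h.symm i (Finset.mem_univ i)
      exact mul_self_eq_zero.mp this
  have hnz : 0 < euclNorm z := Real.sqrt_pos.mpr hzz
  set x : Fin r → ℝ := (euclNorm z)⁻¹ • z with hx
  have hxnorm : euclNorm x = 1 := by
    rw [hx, euclNorm_smul, abs_of_pos (inv_pos.mpr hnz), inv_mul_cancel₀ hnz.ne']
  have hfx : f x = 0 := by rw [hx, _root_.map_smul, hfz, smul_zero]
  -- pad x
  set xh : Fin n → ℝ := padf hrn' x with hxh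
  -- y = B *ᵥ xh
  set y : Fin n → ℝ := B *ᵥ xh with hy
  -- y vanishes below r-1
  have hyz : ∀ j : Fin n, j.val < r - 1 → y j = 0 := by
    intro j hj
    have h1 := congrFun hfx ⟨j.val, hj⟩
    have h2 : (Fin.castLE hr1n ⟨j.val, hj⟩) = j := by ext; rfl
    rw [hy, hxh, ← h2]
    exact h1
  -- norm of xh equals norm of x (squared)
  have hxhxh : xh ⬝ᵥ xh = 1 := by
    have h1 : xh ⬝ᵥ xh = ∑ i : Fin r, x i * x i := by
      rw [dotProduct]
      rw [sum_pad_eq hrn' _ (fun j hj => by rw [hxh, padf_zero hrn' x j hj, mul_zero])]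
      exact Finset.sum_congr rfl fun i _ => by rw [hxh, padf_castLE]
    have h2 : euclNorm x ^ 2 = 1 := by rw [hxnorm]; norm_num
    rw [euclNorm_sq, dotProduct] at h2
    rw [h1, h2]
  -- B is orthogonal
  have hBorth : Bᵀ * B = 1 := by
    rw [hB, Matrix.transpose_mul, Matrix.transpose_transpose, Matrix.transpose_transpose]
    have hQQ : Q * Qᵀ = 1 := mul_eq_one_comm.mp hQ
    have hVV : V * Vᵀ = 1 := mul_eq_one_comm.mp hV
    calc V * Q * (Qᵀ * Vᵀ) = V * (Q * Qᵀ) * Vᵀ := by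
          simp only [Matrix.mul_assoc]
    _ = 1 := by rw [hQQ, mul_one, hVV]
  have hyy : y ⬝ᵥ y = 1 := by rw [hy, orth_dot hBorth, hxhxh]
  -- R *ᵥ xh is the padding of R₁₁ *ᵥ x
  set M := R.submatrix (Fin.castLE hrn.le) (Fin.castLE hrn.le) with hM
  have hRpad : ∀ j : Fin n, r ≤ j.val → (R *ᵥ xh) j = 0 := by
    intro j hj
    rw [mulVec, dotProduct]
    apply Finset.sum_eq_zero
    intro k _
    by_cases hk : k.val < r
    · have : R j k = 0 := hRtri (show (id k : Fin n) < id j from by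
        simpa using Fin.lt_def.mpr (lt_of_lt_of_le hk hj))
      rw [this, zero_mul]
    · rw [hxh, padf_zero hrn' x k (Nat.not_lt.mp hk), mul_zero]
  have hRcast : ∀ i : Fin r, (R *ᵥ xh) (Fin.castLE hrn' i) = (M *ᵥ x) i := by
    intro i
    rw [mulVec, mulVec, dotProduct, dotProduct]
    rw [sum_pad_eq hrn' _ (fun j hj => by rw [hxh, padf_zero hrn' x j hj, mul_zero])]
    exact Finset.sum_congr rfl fun k _ => by simp [hxh, padf_castLE, hM]
  have hMx : (M *ᵥ x) ⬝ᵥ (M *ᵥ x) = (R *ᵥ xh) ⬝ᵥ (R *ᵥ xh) := by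
    rw [dotProduct, dotProduct,
      sum_pad_eq hrn' _ (fun j hj => by rw [hRpad j hj, mul_zero])]
    exact Finset.sum_congr rfl fun i _ => by rw [hRcast]
  -- the key chain of equalities
  have hchain : (R *ᵥ xh) ⬝ᵥ (R *ᵥ xh) = (diagonal σ *ᵥ y) ⬝ᵥ (diagonal σ *ᵥ y) := by
    have h1 : U *ᵥ (R *ᵥ xh) = P *ᵥ (diagonal σ *ᵥ y) := by
      rw [mulVec_mulVec, mulVec_mulVec, ← hQR, hA, hy, mulVec_mulVec]
      congr 1
      rw [hB, Matrix.mul_assoc]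
    calc (R *ᵥ xh) ⬝ᵥ (R *ᵥ xh) = (U *ᵥ (R *ᵥ xh)) ⬝ᵥ (U *ᵥ (R *ᵥ xh)) := (orth_dot hU _).symm
    _ = (P *ᵥ (diagonal σ *ᵥ y)) ⬝ᵥ (P *ᵥ (diagonal σ *ᵥ y)) := by rw [h1]
    _ = (diagonal σ *ᵥ y) ⬝ᵥ (diagonal σ *ᵥ y) := orth_dot hP _
  -- bound the diagonal term
  set σr1 : ℝ := σ ⟨r - 1, by omega⟩ with hσr1
  have hbound : (diagonal σ *ᵥ y) ⬝ᵥ (diagonal σ *ᵥ y) ≤ σr1 ^ 2 := by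
    rw [dotProduct]
    calc ∑ i, (diagonal σ *ᵥ y) i * (diagonal σ *ᵥ y) i
        ≤ ∑ i, σr1 ^ 2 * (y i * y i) := by
          apply Finset.sum_le_sum
          intro i _
          rw [mulVec_diagonal]
          by_cases hi : i.val < r - 1
          · rw [hyz i hi]; simp
          · have hle : σ i ≤ σr1 := hσdec (by
              rw [Fin.le_def]; simpa using Nat.not_lt.mp hi)
            have h1 : σ i * y i * (σ i * y i) = σ i ^ 2 * (y i * y i) := by ring
            rw [h1]
            exact mul_le_mul_of_nonneg_right
              (pow_le_pow_left₀ (hσ0 i) hle 2) (mul_self_nonneg _)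
    _ = σr1 ^ 2 * (y ⬝ᵥ y) := by rw [dotProduct, Finset.mul_sum]
    _ = σr1 ^ 2 := by rw [hyy, mul_one]
  -- sigmaMin membership facts
  have hmem : euclNorm (M *ᵥ x) ∈
      {t | ∃ x : Fin r → ℝ, euclNorm x = 1 ∧ t = euclNorm (M *ᵥ x)} :=
    ⟨x, hxnorm, rfl⟩
  have hbdd : BddBelow {t | ∃ x : Fin r → ℝ, euclNorm x = 1 ∧ t = euclNorm (M *ᵥ x)} := by
    refine ⟨0, fun t ht => ?_⟩
    obtain ⟨w, _, rfl⟩ := ht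
    exact euclNorm_nonneg _
  have hs1 : sigmaMin M ≤ euclNorm (M *ᵥ x) := csInf_le hbdd hmem
  have hs0 : 0 ≤ sigmaMin M := le_csInf ⟨_, hmem⟩ (fun t ht => by
    obtain ⟨w, _, rfl⟩ := ht; exact euclNorm_nonneg _)
  have hsq : sigmaMin M ^ 2 ≤ σr1 ^ 2 := by
    calc sigmaMin M ^ 2 ≤ euclNorm (M *ᵥ x) ^ 2 := by
          exact pow_le_pow_left₀ hs0 hs1 2
    _ = (M *ᵥ x) ⬝ᵥ (M *ᵥ x) := euclNorm_sq _
    _ = (diagonal σ *ᵥ y) ⬝ᵥ (diagonal σ *ᵥ y) := by rw [hMx, hchain]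
    _ ≤ σr1 ^ 2 := hbound
  have hσr0 : 0 ≤ σr1 := hσ0 _
  constructor
  · have : (0:ℝ) ≤ σ ⟨r, hrn⟩ ^ 2 := sq_nonneg _
    linarith
  · calc sigmaMin M = Real.sqrt (sigmaMin M ^ 2) := (Real.sqrt_sq hs0).symm
    _ ≤ Real.sqrt (2 * σr1 ^ 2) := Real.sqrt_le_sqrt (by nlinarith [sq_nonneg σr1])
    _ = Real.sqrt 2 * σr1 := by
        rw [Real.sqrt_mul (by norm_num : (0:ℝ) ≤ 2), Real.sqrt_sq hσr0]
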